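/- Duality of Askey–Wilson polynomials: with dual parameters ã = (q^{-1}abcd)^{1/2}, b̃ = ab/ã, c̃ = ac/ã, d̃ = ad/ã, one has R_n(a^{-1}q^{-m}; a,b,c,d | q) = R_m(ã^{-1}q^{-n}; ã,b̃,c̃,d̃ | q) for all m, n ≥ 0, with both sides equal to the terminating sum Σ_k [(q^{-n};q)_k (q^{n-1}abcd;q)_k (q^{-m};q)_k (q^m a²;q)_k] / [(q;q)_k (ab;q)_k (ac;q)_k (ad;q)_k] q^k. -/

import Mathlib

/-- q-shifted factorial `(b;q)_k`. -/
noncomputable def qp (q b : ℂ) (k : ℕ) : ℂ := ∏ j ∈ Finset.range k, (1 - b * q ^ j)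

/-- Askey–Wilson polynomial `R_n(z;a,b,c,d|q)` as a terminating ₄φ₃ sum. -/
noncomputable def AW (q a b c d z : ℂ) (n : ℕ) : ℂ :=
  ∑ k ∈ Finset.range (n + 1),
    qp q (q ^ (-(n : ℤ))) k * qp q (q ^ ((n : ℤ) - 1) * (a * b * c * d)) k *
      qp q (a * z) k * qp q (a * z⁻¹) k /
      (qp q q k * qp q (a * b) k * qp q (a * c) k * qp q (a * d) k) * q ^ k

lemma qp_qpow_neg_eq_zero {q : ℂ} (hq : q ≠ 0) {n k : ℕ} (h : n < k) :
    qp q (q ^ (-(n : ℤ))) k = 0 := by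
  apply Finset.prod_eq_zero (Finset.mem_range.mpr h)
  rw [← zpow_natCast q n, ← zpow_add₀ hq, neg_add_cancel, zpow_zero, sub_self]

/-- Duality of Askey–Wilson polynomials at the points `a⁻¹ q^{-m}`, both sides
being given by the explicit terminating sum. -/
theorem stmt3 (q a b c d ta tb tc td : ℂ) (m n : ℕ)
    (hq : q ≠ 0) (ha : a ≠ 0) (habcd0 : a * b * c * d ≠ 0)
    (hta : ta ^ 2 = a * b * c * d / q) (hta0 : ta ≠ 0)
    (htb : tb = a * b / ta) (htc : tc = a * c / ta) (htd : td = a * d / ta)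
    (hab : ∀ j : ℕ, a * b ≠ q ^ (-(j : ℤ)))
    (hac : ∀ j : ℕ, a * c ≠ q ^ (-(j : ℤ)))
    (had : ∀ j : ℕ, a * d ≠ q ^ (-(j : ℤ)))
    (habcd : ∀ j : ℕ, a * b * c * d ≠ q ^ (-(j : ℤ)))
    (hroot : ∀ j : ℕ, 1 ≤ j → q ^ j ≠ 1) :
    AW q a b c d (a⁻¹ * q ^ (-(m : ℤ))) n =
        AW q ta tb tc td (ta⁻¹ * q ^ (-(n : ℤ))) m ∧
    AW q a b c d (a⁻¹ * q ^ (-(m : ℤ))) n =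
      ∑ k ∈ Finset.range (min m n + 1),
        qp q (q ^ (-(n : ℤ))) k * qp q (q ^ ((n : ℤ) - 1) * (a * b * c * d)) k *
          qp q (q ^ (-(m : ℤ))) k * qp q (q ^ (m : ℤ) * a ^ 2) k /
          (qp q q k * qp q (a * b) k * qp q (a * c) k * qp q (a * d) k) * q ^ k := by
  have hta2 : ta ^ 2 * q = a * b * c * d := by rw [hta]; field_simp
  have hz1 : a * (a⁻¹ * q ^ (-(m : ℤ))) = q ^ (-(m : ℤ)) := by field_simp
  have hz2 : a * (a⁻¹ * q ^ (-(m : ℤ)))⁻¹ = q ^ (m : ℤ) * a ^ 2 := by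
    rw [mul_inv, inv_inv, ← zpow_neg, neg_neg]; ring
  have hw1 : ta * (ta⁻¹ * q ^ (-(n : ℤ))) = q ^ (-(n : ℤ)) := by field_simp
  have hw2 : ta * (ta⁻¹ * q ^ (-(n : ℤ)))⁻¹ = q ^ ((n : ℤ) - 1) * (a * b * c * d) := by
    rw [mul_inv, inv_inv, ← zpow_neg, neg_neg, zpow_sub₀ hq, zpow_one, ← hta2]
    field_simp
  have h1 : ta * tb = a * b := by rw [htb]; field_simp
  have h2 : ta * tc = a * c := by rw [htc]; field_simp
  have h3 : ta * td = a * d := by rw [htd]; field_simp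
  have h4 : q ^ ((m : ℤ) - 1) * (ta * tb * tc * td) = q ^ (m : ℤ) * a ^ 2 := by
    rw [zpow_sub₀ hq, zpow_one, htb, htc, htd]
    field_simp
    linear_combination (-1 : ℂ) * hta2
  -- the common term
  set T : ℕ → ℂ := fun k =>
    qp q (q ^ (-(n : ℤ))) k * qp q (q ^ ((n : ℤ) - 1) * (a * b * c * d)) k *
      qp q (q ^ (-(m : ℤ))) k * qp q (q ^ (m : ℤ) * a ^ 2) k /
      (qp q q k * qp q (a * b) k * qp q (a * c) k * qp q (a * d) k) * q ^ k with hT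
  have hL : AW q a b c d (a⁻¹ * q ^ (-(m : ℤ))) n = ∑ k ∈ Finset.range (n + 1), T k := by
    simp only [AW, hz1, hz2, hT]
  have hR : AW q ta tb tc td (ta⁻¹ * q ^ (-(n : ℤ))) m = ∑ k ∈ Finset.range (m + 1), T k := by
    simp only [AW, h4]
    simp only [hw1, hw2, h1, h2, h3, hT]
    exact Finset.sum_congr rfl fun k _ => by ring
  have trunc : ∀ N : ℕ, min m n ≤ N →
      ∑ k ∈ Finset.range (N + 1), T k = ∑ k ∈ Finset.range (min m n + 1), T k := by
    intro N hN
    symm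
    apply Finset.sum_subset (Finset.range_subset_range.mpr (by omega))
    intro k hk hk'
    simp only [Finset.mem_range] at hk hk'
    have hmn : m < k ∨ n < k := by omega
    rcases hmn with h | h
    · simp only [hT, qp_qpow_neg_eq_zero hq h, mul_zero, zero_mul, zero_div]
    · simp only [hT, qp_qpow_neg_eq_zero hq h, mul_zero, zero_mul, zero_div]
  constructor
  · rw [hL, hR, trunc n (min_le_right m n), trunc m (min_le_left m n)]
  · rw [hL, trunc n (min_le_right m n)]
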